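/- arXiv:2308.16859 — 5 statements merged into one kernel-verified Lean document; each statement's English description precedes it below -/
import Mathlib

section
/- Let A ⊆ V be an ancestral set. Then the principal submatrix Φ_{AA} satisfies Φ_{AA} = σ (I_A − H_{AA})^{-1} ((I_A − H_{AA})^{-1})^*, or equivalently (Φ_{AA})^{-1} = (1/σ)(I_A − H_{AA})^* (I_A − H_{AA}), where H_{AA} denotes the submatrix of H with rows and columns indexed by A and I_A the identity on A. -/
open Matrix
open scoped Classical

noncomputable section

/-- `parents E i`: vertices `j` with a directed edge `j → i`, i.e. `(j,i) ∈ E`. -/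
def parents {p : ℕ} (E : Fin p → Fin p → Prop) (i : Fin p) : Set (Fin p) := {j | E j i}

/-- Acyclicity: there is no (nonempty) directed cycle. -/
def Acyclic {p : ℕ} (E : Fin p → Fin p → Prop) : Prop :=
  ∀ i : Fin p, ¬ Relation.TransGen E i i

/-- A set `C` is ancestral if it contains the parents of each of its members. -/
def Ancestral {p : ℕ} (E : Fin p → Fin p → Prop) (C : Finset (Fin p)) : Prop :=
  ∀ c ∈ C, ∀ j : Fin p, E j c → j ∈ C

/-- Nondescendants of `i`: all vertices other than `i` not reachable from `i`
by a nonempty directed path. -/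
def nondesc {p : ℕ} (E : Fin p → Fin p → Prop) (i : Fin p) : Set (Fin p) :=
  {j | j ≠ i ∧ ¬ Relation.TransGen E i j}

/-- `Phi σ H = σ (I - H)⁻¹ ((I - H)⁻¹)^*`. -/
def Phi {p : ℕ} (σ : ℝ) (H : Matrix (Fin p) (Fin p) ℂ) : Matrix (Fin p) (Fin p) ℂ :=
  (σ : ℂ) • ((1 - H)⁻¹ * ((1 - H)⁻¹)ᴴ)

/-- Submatrix of `Φ` with rows indexed by `S` and columns by `T`. -/
def subm {p : ℕ} (Φ : Matrix (Fin p) (Fin p) ℂ) (S T : Finset (Fin p)) :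
    Matrix S T ℂ := Matrix.of fun s t => Φ s.1 t.1

/-- The conditional PSD `f(i,C) = Φ_{ii} - Φ_{iC} Φ_{CC}⁻¹ Φ_{Ci}` (a real scalar). -/
def condPSD {p : ℕ} (σ : ℝ) (H : Matrix (Fin p) (Fin p) ℂ)
    (i : Fin p) (C : Finset (Fin p)) : ℝ :=
  (Phi σ H i i -
    dotProduct (fun c : C => Phi σ H i c.1)
      (Matrix.mulVec (subm (Phi σ H) C C)⁻¹ (fun c : C => Phi σ H c.1 i))).re

lemma det_one_sub_ne_zero {n : Type*} [Fintype n] [DecidableEq n]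
    (E : n → n → Prop) (hacyc : ∀ i, ¬ Relation.TransGen E i i)
    (M : Matrix n n ℂ) (hsupp : ∀ a b : n, M a b ≠ 0 → E b a) :
    (1 - M).det ≠ 0 := by
  intro hdet
  obtain ⟨v, hv0, hv⟩ := (Matrix.exists_mulVec_eq_zero_iff).2 hdet
  have key : ∀ i, v i ≠ 0 → ∃ j, v j ≠ 0 ∧ E j i := by
    intro i hi
    have h1 : v i - Matrix.mulVec M v i = 0 := by
      have := congrFun hv i
      simpa [Matrix.sub_mulVec] using this
    have h2 : v i = ∑ j, M i j * v j := by
      rw [sub_eq_zero] at h1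
      simpa [Matrix.mulVec, dotProduct] using h1
    have hs : ∑ j, M i j * v j ≠ 0 := h2 ▸ hi
    obtain ⟨j, _, hj⟩ := Finset.exists_ne_zero_of_sum_ne_zero hs
    exact ⟨j, right_ne_zero_of_mul hj, hsupp i j (left_ne_zero_of_mul hj)⟩
  obtain ⟨i₀, hi₀⟩ := Function.ne_iff.mp hv0
  have hg : ∀ i : {i : n // v i ≠ 0}, ∃ j : {i : n // v i ≠ 0}, E j.1 i.1 := by
    intro i
    obtain ⟨j, hj, hE⟩ := key i.1 i.2
    exact ⟨⟨j, hj⟩, hE⟩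
  choose g hgE using hg
  have hchain : ∀ (x : {i : n // v i ≠ 0}) (k : ℕ),
      Relation.TransGen E ((g^[k+1]) x).1 x.1 := by
    intro x k
    induction k with
    | zero => simpa using Relation.TransGen.single (hgE x)
    | succ k ih =>
      rw [Function.iterate_succ_apply']
      exact Relation.TransGen.trans (Relation.TransGen.single (hgE _)) ih
  set x₀ : {i : n // v i ≠ 0} := ⟨i₀, by simpa using hi₀⟩
  have main : ∀ a b : ℕ, a < b → (g^[a]) x₀ = (g^[b]) x₀ → False := by
    intro a b hab heq
    obtain ⟨d, rfl⟩ := Nat.exists_eq_add_of_lt hab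
    have h3 : Relation.TransGen E ((g^[a + d + 1]) x₀).1 ((g^[a]) x₀).1 := by
      have := hchain ((g^[a]) x₀) d
      rwa [← Function.iterate_add_apply, show d + 1 + a = a + d + 1 by omega] at this
    rw [← heq] at h3
    exact hacyc _ h3
  obtain ⟨a, b, hne, heq⟩ :=
    Finite.exists_ne_map_eq_of_infinite (fun k : ℕ => (g^[k]) x₀)
  rcases hne.lt_or_gt with h | h
  · exact main a b h heq
  · exact main b a h heq.symm

lemma sum_reduce {p : ℕ} (A : Finset (Fin p)) (F : Fin p → ℂ)
    (h0 : ∀ j ∉ A, F j = 0) : ∑ j, F j = ∑ b : A, F b.1 := by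
  rw [Finset.sum_coe_sort A F]
  exact (Finset.sum_subset (Finset.subset_univ A) (fun j _ hj => h0 j hj)).symm


/-- for an ancestral set `A`, `Φ_{AA} = σ (I_A - H_{AA})⁻¹ ((I_A - H_{AA})⁻¹)^*`,
equivalently `(Φ_{AA})⁻¹ = (1/σ)(I_A - H_{AA})^* (I_A - H_{AA})`. -/
theorem submatrix_ancestral {p : ℕ}
    (E : Fin p → Fin p → Prop) (hacyc : Acyclic E)
    (σ : ℝ) (hσ : 0 < σ)
    (H : Matrix (Fin p) (Fin p) ℂ) (hH : ∀ a b : Fin p, H a b ≠ 0 ↔ E b a)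
    (A : Finset (Fin p)) (hA : Ancestral E A) :
    subm (Phi σ H) A A =
      (σ : ℂ) • ((1 - subm H A A)⁻¹ * ((1 - subm H A A)⁻¹)ᴴ) ∧
    (subm (Phi σ H) A A)⁻¹ =
      (σ : ℂ)⁻¹ • ((1 - subm H A A)ᴴ * (1 - subm H A A)) := by
  set B := (1 - H)⁻¹ with hBdef
  have hdet : (1 - H).det ≠ 0 :=
    det_one_sub_ne_zero E hacyc H (fun a b h => (hH a b).1 h)
  have hBl : (1 - H) * B = 1 := Matrix.mul_nonsing_inv _ (isUnit_iff_ne_zero.2 hdet)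
  have hdetA : (1 - subm H A A).det ≠ 0 := by
    refine det_one_sub_ne_zero (fun a b : A => E a.1 b.1)
      (fun i hi => hacyc i.1 (Relation.TransGen.lift Subtype.val (fun a b h => h) i i hi))
      (subm H A A) (fun a b h => (hH a.1 b.1).1 h)
  have hH0 : ∀ a ∈ A, ∀ j, j ∉ A → H a j = 0 := by
    intro a ha j hj
    by_contra h
    exact hj (hA a ha j ((hH a j).1 h))
  -- key entrywise equation
  have hEq : ∀ (a : A) (j' : Fin p),
      B a.1 j' - ∑ b : A, H a.1 b.1 * B b.1 j' = if a.1 = j' then 1 else 0 := by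
    intro a j'
    have h := congrFun (congrFun hBl a.1) j'
    rw [Matrix.mul_apply] at h
    have hsplit : ∑ j, (1 - H) a.1 j * B j j'
        = B a.1 j' - ∑ j, H a.1 j * B j j' := by
      simp [Matrix.sub_apply, Matrix.one_apply, sub_mul, Finset.sum_sub_distrib]
    have hred : ∑ j, H a.1 j * B j j' = ∑ b : A, H a.1 b.1 * B b.1 j' :=
      sum_reduce A _ (fun j hj => by rw [hH0 a.1 a.2 j hj, zero_mul])
    rw [hsplit, hred] at h
    rw [h, Matrix.one_apply]
  have hB0 : ∀ a ∈ A, ∀ j' ∉ A, B a j' = 0 := by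
    intro a ha j' hj'
    set w : A → ℂ := fun b => B b.1 j' with hw
    have hmv : (1 - subm H A A).mulVec w = 0 := by
      funext b
      have := hEq b j'
      rw [if_neg (fun hbj : b.1 = j' => hj' (hbj ▸ b.2))] at this
      simpa [Matrix.mulVec, dotProduct, Matrix.sub_apply, Matrix.one_apply,
        sub_mul, Finset.sum_sub_distrib, subm, w] using this
    have hw0 : w = 0 := by
      by_contra hwne
      exact hdetA (Matrix.exists_mulVec_eq_zero_iff.1 ⟨w, hwne, hmv⟩)
    exact congrFun hw0 ⟨a, ha⟩
  have hN : (1 - subm H A A) * subm B A A = 1 := by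
    ext a a'
    have := hEq a a'.1
    rw [Matrix.mul_apply]
    have : ∑ b : A, (1 - subm H A A) a b * subm B A A b a'
        = B a.1 a'.1 - ∑ b : A, H a.1 b.1 * B b.1 a'.1 := by
      simp [Matrix.sub_apply, Matrix.one_apply, sub_mul, Finset.sum_sub_distrib, subm]
    rw [this, hEq a a'.1, Matrix.one_apply]
    exact if_congr Subtype.ext_iff.symm rfl rfl
  have hBinv : subm B A A = (1 - subm H A A)⁻¹ := (Matrix.inv_eq_right_inv hN).symm
  set N := 1 - subm H A A with hNdef
  have hNr : N * N⁻¹ = 1 := Matrix.mul_nonsing_inv _ (isUnit_iff_ne_zero.2 hdetA)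
  have hNl : N⁻¹ * N = 1 := Matrix.nonsing_inv_mul _ (isUnit_iff_ne_zero.2 hdetA)
  have part1 : subm (Phi σ H) A A = (σ : ℂ) • (N⁻¹ * (N⁻¹)ᴴ) := by
    ext a a'
    show Phi σ H a.1 a'.1 = ((σ : ℂ) • (N⁻¹ * (N⁻¹)ᴴ)) a a'
    rw [Phi, ← hBinv]
    simp only [Matrix.smul_apply, Matrix.mul_apply, Matrix.conjTranspose_apply,
      smul_eq_mul, subm, Matrix.of_apply, ← hBdef]
    congr 1
    exact sum_reduce A (fun j => B a.1 j * star (B a'.1 j))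
      (fun j hj => by show B a.1 j * star (B a'.1 j) = 0; rw [hB0 a.1 a.2 j hj, zero_mul])
  refine ⟨part1, ?_⟩
  have hσ0 : (σ : ℂ) ≠ 0 := Complex.ofReal_ne_zero.2 hσ.ne'
  have hrinv : subm (Phi σ H) A A * ((σ : ℂ)⁻¹ • (Nᴴ * N)) = 1 := by
    rw [part1, Matrix.smul_mul, Matrix.mul_smul, smul_smul, mul_inv_cancel₀ hσ0, one_smul]
    have hcc : (N⁻¹)ᴴ * Nᴴ = 1 := by
      rw [← Matrix.conjTranspose_mul, hNr, Matrix.conjTranspose_one]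
    calc N⁻¹ * (N⁻¹)ᴴ * (Nᴴ * N) = N⁻¹ * ((N⁻¹)ᴴ * Nᴴ) * N := by
          rw [Matrix.mul_assoc, Matrix.mul_assoc, Matrix.mul_assoc]
      _ = 1 := by rw [hcc, Matrix.mul_one, hNl]
  exact Matrix.inv_eq_right_inv hrinv
end
end

section
/- (Lemma 3.3, first part.) Let j ∈ V and let C ⊆ V \ {j} be an ancestral set with pa(j) ⊆ C. Then f(j,C) = σ. -/
open Matrix
open scoped Classical

noncomputable section

/-- Ancestral sets are closed under taking ancestors. -/
lemma ancestral_mem_of_transGen {p : ℕ} {E : Fin p → Fin p → Prop}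
    {C : Finset (Fin p)} (hanc : Ancestral E C)
    {x k : Fin p} (h : Relation.TransGen E x k) : k ∈ C → x ∈ C := by
  induction h with
  | single h => exact fun hk => hanc _ hk _ h
  | tail _ e ih => exact fun hk => ih (hanc _ hk _ e)

/-- A matrix supported on an acyclic relation is nilpotent. -/
lemma H_nilpotent {p : ℕ} {E : Fin p → Fin p → Prop} (hacyc : Acyclic E)
    (H : Matrix (Fin p) (Fin p) ℂ) (hH : ∀ a b : Fin p, H a b ≠ 0 ↔ E b a) :
    H ^ p = 0 := by
  classical
  set r : Fin p → ℕ :=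
    fun x => (Finset.univ.filter (fun y => Relation.TransGen E y x)).card with hr
  have hstep : ∀ {b i : Fin p}, E b i → r b < r i := by
    intro b i hbi
    apply Finset.card_lt_card
    rw [Finset.ssubset_def]
    constructor
    · intro y hy
      simp only [Finset.mem_filter, Finset.mem_univ, true_and] at hy ⊢
      exact hy.tail hbi
    · intro hsub
      have hb : b ∈ Finset.univ.filter (fun y => Relation.TransGen E y i) := by
        simp only [Finset.mem_filter, Finset.mem_univ, true_and]
        exact Relation.TransGen.single hbi
      have := hsub hb
      simp only [Finset.mem_filter, Finset.mem_univ, true_and] at this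
      exact hacyc b this
  have key : ∀ n : ℕ, ∀ k l : Fin p, (H ^ n) k l ≠ 0 → r l + n ≤ r k := by
    intro n
    induction n with
    | zero =>
      intro k l h
      rcases eq_or_ne k l with rfl | hne
      · simp
      · exfalso; apply h
        simp [Matrix.one_apply_ne hne]
    | succ n ih =>
      intro k l h
      rw [pow_succ', Matrix.mul_apply] at h
      obtain ⟨b, -, hb⟩ := Finset.exists_ne_zero_of_sum_ne_zero h
      have h1 : H k b ≠ 0 := left_ne_zero_of_mul hb
      have h2 : (H ^ n) b l ≠ 0 := right_ne_zero_of_mul hb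
      have hbl := ih b l h2
      have hE : E b k := (hH k b).mp h1
      have hbk := hstep hE
      omega
  ext k l
  simp only [Matrix.zero_apply]
  by_contra h
  have hk := key p k l h
  have hle : r k ≤ p := by
    have := Finset.card_filter_le Finset.univ (fun y => Relation.TransGen E y k)
    simpa using this
  have hrk : r k = p := by omega
  have huniv : Finset.univ.filter (fun y => Relation.TransGen E y k) = Finset.univ := by
    apply Finset.eq_univ_of_card
    simpa using hrk
  have : k ∈ Finset.univ.filter (fun y => Relation.TransGen E y k) := by
    rw [huniv]; exact Finset.mem_univ k
  simp only [Finset.mem_filter, Finset.mem_univ, true_and] at this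
  exact hacyc k this

open scoped ComplexOrder

/-- Lemma 3.3, first part: if `C ⊆ V \ {j}` is ancestral and `pa(j) ⊆ C`,
then `f(j,C) = σ`. -/
theorem condPSD_eq_sigma_of_parents_subset {p : ℕ}
    (E : Fin p → Fin p → Prop) (hacyc : Acyclic E)
    (σ : ℝ) (hσ : 0 < σ)
    (H : Matrix (Fin p) (Fin p) ℂ) (hH : ∀ a b : Fin p, H a b ≠ 0 ↔ E b a)
    (j : Fin p) (C : Finset (Fin p)) (hjC : j ∉ C)
    (hanc : Ancestral E C) (hpa : parents E j ⊆ ↑C) :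
    condPSD σ H j C = σ := by
  classical
  have hirr : ∀ i : Fin p, ¬ E i i := fun i h => hacyc i (Relation.TransGen.single h)
  have hHdiag : ∀ i : Fin p, H i i = 0 := by
    intro i
    by_contra h
    exact hirr i ((hH i i).mp h)
  have hnil : H ^ p = 0 := H_nilpotent hacyc H hH
  have hunitA : IsUnit (1 - H) := IsNilpotent.isUnit_one_sub ⟨p, hnil⟩
  have hdetA : IsUnit (1 - H).det := (Matrix.isUnit_iff_isUnit_det _).mp hunitA
  set M : Matrix (Fin p) (Fin p) ℂ := (1 - H)⁻¹ with hMdef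
  have hAM : (1 - H) * M = 1 := Matrix.mul_nonsing_inv _ hdetA
  have hMA : M * (1 - H) = 1 := Matrix.nonsing_inv_mul _ hdetA
  have hΦdef : Phi σ H = (σ : ℂ) • (M * Mᴴ) := rfl
  -- well-foundedness of reachability
  have hwf : WellFounded (Relation.TransGen E) := by
    have h1 : IsTrans (Fin p) (Relation.TransGen E) :=
      ⟨fun _ _ _ => Relation.TransGen.trans⟩
    have h2 : IsIrrefl (Fin p) (Relation.TransGen E) := ⟨hacyc⟩
    exact Finite.wellFounded_of_trans_of_irrefl _
  -- entries of M in column j vanish at non-descendants of j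
  have hMzero : ∀ k : Fin p, k ≠ j ∧ ¬ Relation.TransGen E j k → M k j = 0 := by
    intro k
    refine hwf.induction
      (C := fun k => k ≠ j ∧ ¬ Relation.TransGen E j k → M k j = 0) k ?_
    rintro k ih ⟨hkj, hreach⟩
    have h1 : (1 : Matrix (Fin p) (Fin p) ℂ) k j = ∑ b, (1 - H) k b * M b j := by
      rw [← Matrix.mul_apply, hAM]
    have hsum : ∑ b, (1 - H) k b * M b j = M k j := by
      rw [Finset.sum_eq_single_of_mem k (Finset.mem_univ k)]
      · simp [Matrix.sub_apply, Matrix.one_apply_eq, hHdiag k]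
      · intro b _ hbk
        rcases eq_or_ne (H k b) 0 with h0 | h0
        · simp [Matrix.sub_apply, Matrix.one_apply_ne (Ne.symm hbk), h0]
        · have hE : E b k := (hH k b).mp h0
          have hbj : b ≠ j := by
            rintro rfl
            exact hreach (Relation.TransGen.single hE)
          have hnb : ¬ Relation.TransGen E j b := fun hb => hreach (hb.tail hE)
          have hMb : M b j = 0 := ih b (Relation.TransGen.single hE) ⟨hbj, hnb⟩
          simp [hMb]
    have h2 : (1 : Matrix (Fin p) (Fin p) ℂ) k j = 0 := Matrix.one_apply_ne hkj
    rw [← hsum, ← h1, h2]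
  have hMjj : M j j = 1 := by
    have h1 : (1 : Matrix (Fin p) (Fin p) ℂ) j j = ∑ b, (1 - H) j b * M b j := by
      rw [← Matrix.mul_apply, hAM]
    have hsum : ∑ b, (1 - H) j b * M b j = M j j := by
      rw [Finset.sum_eq_single_of_mem j (Finset.mem_univ j)]
      · simp [Matrix.sub_apply, Matrix.one_apply_eq, hHdiag j]
      · intro b _ hbj
        rcases eq_or_ne (H j b) 0 with h0 | h0
        · simp [Matrix.sub_apply, Matrix.one_apply_ne (Ne.symm hbj), h0]
        · have hE : E b j := (hH j b).mp h0
          have hMb : M b j = 0 :=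
            hMzero b ⟨hbj, fun hb => hacyc j (hb.tail hE)⟩
          simp [hMb]
    rw [← hsum, ← h1, Matrix.one_apply_eq]
  -- the key matrix identity Φ (I-H)ᴴ = σ M
  have hMAH : Mᴴ * (1 - H)ᴴ = 1 := by
    rw [← Matrix.conjTranspose_mul, hAM, Matrix.conjTranspose_one]
  have hAHM : (1 - H)ᴴ * Mᴴ = 1 := by
    rw [← Matrix.conjTranspose_mul, hMA, Matrix.conjTranspose_one]
  have hkeymat : Phi σ H * (1 - H)ᴴ = (σ : ℂ) • M := by
    rw [hΦdef, Matrix.smul_mul, Matrix.mul_assoc, hMAH, Matrix.mul_one]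
  -- the entrywise key identity
  have hstar : ∀ k : Fin p,
      Phi σ H k j + ∑ c : {x // x ∈ C}, Phi σ H k c.1 * star ((1 - H) j c.1)
        = (σ : ℂ) * M k j := by
    intro k
    have h1 : ∑ b, Phi σ H k b * (1 - H)ᴴ b j = (σ : ℂ) * M k j := by
      rw [← Matrix.mul_apply, hkeymat, Matrix.smul_apply, smul_eq_mul]
    have hzero : ∀ b ∈ Finset.univ, b ∉ insert j C →
        Phi σ H k b * (1 - H)ᴴ b j = 0 := by
      intro b _ hb
      simp only [Finset.mem_insert, not_or] at hb
      have hHjb : H j b = 0 := by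
        by_contra h0
        exact hb.2 (hpa ((hH j b).mp h0))
      have hAjb : (1 - H) j b = 0 := by
        simp [Matrix.sub_apply, Matrix.one_apply_ne (Ne.symm hb.1), hHjb]
      simp [Matrix.conjTranspose_apply, hAjb]
    rw [← Finset.sum_subset (Finset.subset_univ (insert j C)) hzero,
      Finset.sum_insert hjC] at h1
    have hjterm : Phi σ H k j * (1 - H)ᴴ j j = Phi σ H k j := by
      have : (1 - H) j j = 1 := by
        simp [Matrix.sub_apply, Matrix.one_apply_eq, hHdiag j]
      simp [Matrix.conjTranspose_apply, this]
    rw [hjterm] at h1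
    rw [← h1]
    congr 1
    rw [← Finset.sum_coe_sort C (fun b => Phi σ H k b * (1 - H)ᴴ b j)]
    apply Finset.sum_congr rfl
    intro c _
    rw [Matrix.conjTranspose_apply]
  -- σ M c j = 0 for c ∈ C
  have hMCzero : ∀ c : {x // x ∈ C}, M c.1 j = 0 := by
    intro c
    apply hMzero
    constructor
    · rintro h
      exact hjC (h ▸ c.2)
    · intro hreach
      exact hjC (ancestral_mem_of_transGen hanc hreach c.2)
  -- Φ is positive semidefinite
  have hps : (Phi σ H).PosSemidef := by
    have hform : Phi σ H =
        (((Real.sqrt σ : ℝ) : ℂ) • M) * (((Real.sqrt σ : ℝ) : ℂ) • M)ᴴ := by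
      rw [Matrix.conjTranspose_smul, Matrix.smul_mul, Matrix.mul_smul, smul_smul,
        Complex.star_def, Complex.conj_ofReal, ← Complex.ofReal_mul,
        Real.mul_self_sqrt hσ.le, hΦdef]
    rw [hform]
    exact Matrix.posSemidef_self_mul_conjTranspose _
  -- Φ is a unit
  have hΦunit : IsUnit (Phi σ H) := by
    have hσ0 : (σ : ℂ) ≠ 0 := by
      simp only [ne_eq, Complex.ofReal_eq_zero]
      exact hσ.ne'
    refine isUnit_iff_exists.mpr ⟨(σ : ℂ)⁻¹ • ((1 - H)ᴴ * (1 - H)), ?_, ?_⟩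
    · rw [hΦdef, Matrix.smul_mul, Matrix.mul_smul, smul_smul, mul_inv_cancel₀ hσ0,
        one_smul]
      calc M * Mᴴ * ((1 - H)ᴴ * (1 - H))
          = M * (Mᴴ * (1 - H)ᴴ) * (1 - H) := by
            simp only [Matrix.mul_assoc]
        _ = 1 := by rw [hMAH, Matrix.mul_one, hMA]
    · rw [hΦdef, Matrix.smul_mul, Matrix.mul_smul, smul_smul, inv_mul_cancel₀ hσ0,
        one_smul]
      calc (1 - H)ᴴ * (1 - H) * (M * Mᴴ)
          = (1 - H)ᴴ * ((1 - H) * M) * Mᴴ := by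
            simp only [Matrix.mul_assoc]
        _ = 1 := by rw [hAM, Matrix.mul_one, hAHM]
  have hΦinj : Function.Injective (Phi σ H).mulVec :=
    Matrix.mulVec_injective_iff_isUnit.mpr hΦunit
  -- sum reduction helper
  have hsum_ext : ∀ f : Fin p → ℂ, (∀ b : Fin p, b ∉ C → f b = 0) →
      ∑ b, f b = ∑ c : {x // x ∈ C}, f c.1 := by
    intro f hf
    rw [← Finset.sum_subset (Finset.subset_univ C) (fun b _ hb => hf b hb),
      ← Finset.sum_coe_sort C f]
  -- the C × C block of Φ is a unit
  have hsubinj : Function.Injective (subm (Phi σ H) C C).mulVec := by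
    have hker : ∀ x : {y // y ∈ C} → ℂ, (subm (Phi σ H) C C) *ᵥ x = 0 → x = 0 := by
      intro x hx
      set x' : Fin p → ℂ := fun k => if h : k ∈ C then x ⟨k, h⟩ else 0 with hx'def
      have hx'C : ∀ c : {y // y ∈ C}, x' c.1 = x c := by
        intro c
        simp [hx'def, c.2]
      have hx'0 : ∀ b : Fin p, b ∉ C → x' b = 0 := by
        intro b hb
        simp [hx'def, hb]
      have hΦx' : ∀ c : {y // y ∈ C}, (Phi σ H *ᵥ x') c.1 = 0 := by
        intro c
        have h1 : (Phi σ H *ᵥ x') c.1 = ∑ b, Phi σ H c.1 b * x' b := by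
          rw [Matrix.mulVec, dotProduct]
        have h2 : ∑ b, Phi σ H c.1 b * x' b
            = ∑ d : {y // y ∈ C}, Phi σ H c.1 d.1 * x d := by
          rw [hsum_ext _ (fun b hb => by simp [hx'0 b hb])]
          exact Finset.sum_congr rfl fun d _ => by rw [hx'C]
        have h3 : ∑ d : {y // y ∈ C}, Phi σ H c.1 d.1 * x d
            = ((subm (Phi σ H) C C) *ᵥ x) c := rfl
        rw [h1, h2, h3, hx]
        rfl
      have hdot0 : star x' ⬝ᵥ (Phi σ H *ᵥ x') = 0 := by
        rw [dotProduct]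
        rw [hsum_ext _ (fun b hb => by simp [Pi.star_apply, hx'0 b hb])]
        apply Finset.sum_eq_zero
        intro c _
        rw [hΦx' c, mul_zero]
      have hΦx'0 : Phi σ H *ᵥ x' = 0 := (hps.dotProduct_mulVec_zero_iff x').mp hdot0
      have hx'0' : x' = 0 := by
        apply hΦinj
        rw [hΦx'0, Matrix.mulVec_zero]
      funext c
      rw [← hx'C c, hx'0']
      rfl
    intro x y hxy
    have : (subm (Phi σ H) C C) *ᵥ (x - y) = 0 := by
      rw [Matrix.mulVec_sub, hxy, sub_self]
    have := hker _ this
    exact sub_eq_zero.mp this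
  have hsubdet : IsUnit (subm (Phi σ H) C C).det :=
    (Matrix.isUnit_iff_isUnit_det _).mp (Matrix.mulVec_injective_iff_isUnit.mp hsubinj)
  -- the explicit solution w
  set w : {x // x ∈ C} → ℂ := fun c => star ((1 - H) j c.1) with hwdef
  have hclaimA : (subm (Phi σ H) C C) *ᵥ w = fun c => -(Phi σ H c.1 j) := by
    funext c
    have h1 : ((subm (Phi σ H) C C) *ᵥ w) c
        = ∑ d : {x // x ∈ C}, Phi σ H c.1 d.1 * star ((1 - H) j d.1) := rfl
    have h2 := hstar c.1
    rw [hMCzero c, mul_zero] at h2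
    rw [h1]
    linear_combination h2
  have hmv : (subm (Phi σ H) C C)⁻¹ *ᵥ (fun c : C => Phi σ H c.1 j) = -w := by
    have h1 : (fun c : C => Phi σ H c.1 j) = (subm (Phi σ H) C C) *ᵥ (-w) := by
      rw [Matrix.mulVec_neg, hclaimA]
      funext c
      simp
    rw [h1, Matrix.mulVec_mulVec, Matrix.nonsing_inv_mul _ hsubdet, Matrix.one_mulVec]
  have hdot : dotProduct (fun c : C => Phi σ H j c.1)
      ((subm (Phi σ H) C C)⁻¹ *ᵥ (fun c : C => Phi σ H c.1 j))
      = Phi σ H j j - (σ : ℂ) := by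
    rw [hmv, dotProduct]
    have h2 := hstar j
    rw [hMjj, mul_one] at h2
    have h3 : ∑ c : {x // x ∈ C}, (fun c : C => Phi σ H j c.1) c * (-w) c
        = -∑ c : {x // x ∈ C}, Phi σ H j c.1 * star ((1 - H) j c.1) := by
      rw [← Finset.sum_neg_distrib]
      exact Finset.sum_congr rfl fun c _ => by simp only [hwdef, Pi.neg_apply]; ring
    rw [h3]
    linear_combination -h2
  unfold condPSD
  rw [hdot, sub_sub_cancel, Complex.ofReal_re]
end
end

section
/- Let C ⊆ A ⊆ V with both C and A ancestral sets, and let D := A \ C. Then the Schur complement satisfies Φ_{DD} − Φ_{DC} Φ_{CC}^{-1} Φ_{CD} = σ (I_D − H_{DD})^{-1} ((I_D − H_{DD})^{-1})^*, or equivalently (Φ_{DD} − Φ_{DC} Φ_{CC}^{-1} Φ_{CD})^{-1} = (1/σ)(I_D − H_{DD})^* (I_D − H_{DD}). -/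
open Matrix
open scoped Classical

noncomputable section

-- nilpotency from acyclicity
lemma hpow_p_zero {p : ℕ} (E : Fin p → Fin p → Prop) (hacyc : Acyclic E)
    (H : Matrix (Fin p) (Fin p) ℂ) (hH : ∀ a b : Fin p, H a b ≠ 0 ↔ E b a) :
    H ^ p = 0 := by
  classical
  set f : Fin p → ℕ := fun i => (Finset.univ.filter fun j => Relation.TransGen E j i).card with hf
  have key : ∀ n, ∀ i j : Fin p, f i < n → (H ^ n) i j = 0 := by
    intro n
    induction n with
    | zero => intro i j h; exact absurd h (Nat.not_lt_zero _)
    | succ n ih =>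
      intro i j hi
      rw [pow_succ', Matrix.mul_apply]
      apply Finset.sum_eq_zero
      intro m _
      by_cases hm : H i m = 0
      · rw [hm, zero_mul]
      · have hE : E m i := (hH i m).1 hm
        have hfm : f m < f i := by
          apply Finset.card_lt_card
          constructor
          · intro x hx
            simp only [Finset.mem_filter, Finset.mem_univ, true_and] at hx ⊢
            exact hx.trans (Relation.TransGen.single hE)
          · intro hsub
            have hmem : m ∈ Finset.univ.filter fun j => Relation.TransGen E j i := by
              simp only [Finset.mem_filter, Finset.mem_univ, true_and]
              exact Relation.TransGen.single hE
            have := hsub hmem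
            simp only [Finset.mem_filter, Finset.mem_univ, true_and] at this
            exact hacyc m this
        rw [ih m j (by omega), mul_zero]
  ext i j
  have hfi : f i < p := by
    have : (Finset.univ.filter fun j => Relation.TransGen E j i) ⊂ Finset.univ := by
      refine Finset.ssubset_univ_iff.mpr ?_
      intro h
      have : i ∈ Finset.univ.filter fun j => Relation.TransGen E j i := by
        rw [h]; exact Finset.mem_univ i
      simp only [Finset.mem_filter, Finset.mem_univ, true_and] at this
      exact hacyc i this
    simpa using Finset.card_lt_card this
  simpa using key p i j hfi

-- rows in an ancestral-like set vanish outside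
lemma pow_row_zero {p : ℕ} (E : Fin p → Fin p → Prop)
    (H : Matrix (Fin p) (Fin p) ℂ) (hH : ∀ a b : Fin p, H a b ≠ 0 ↔ E b a)
    (S : Finset (Fin p)) (hS : Ancestral E S) :
    ∀ k, ∀ s ∈ S, ∀ j, j ∉ S → (H ^ k) s j = 0 := by
  intro k
  induction k with
  | zero =>
    intro s hs j hj
    have hne : s ≠ j := fun h => hj (h ▸ hs)
    simp [Matrix.one_apply, hne]
  | succ k ih =>
    intro s hs j hj
    rw [pow_succ', Matrix.mul_apply]
    apply Finset.sum_eq_zero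
    intro m _
    by_cases hm : H s m = 0
    · rw [hm, zero_mul]
    · rw [ih m (hS s hs m ((hH s m).1 hm)) j hj, mul_zero]

lemma subm_one {p : ℕ} (S : Finset (Fin p)) : subm (1 : Matrix (Fin p) (Fin p) ℂ) S S = 1 := by
  ext s t
  simp only [subm, Matrix.of_apply, Matrix.one_apply, Subtype.ext_iff]

lemma subm_pow {p : ℕ} (H : Matrix (Fin p) (Fin p) ℂ) (S : Finset (Fin p))
    (h : ∀ s ∈ S, ∀ m, m ∉ S → ∀ t ∈ S, ∀ k, H s m * (H ^ k) m t = 0) :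
    ∀ k, subm (H ^ k) S S = (subm H S S) ^ k := by
  intro k
  induction k with
  | zero => rw [pow_zero, pow_zero]; exact subm_one S
  | succ k ih =>
    rw [pow_succ', pow_succ', ← ih]
    ext s t
    show (H * H ^ k) s.1 t.1 = (subm H S S * subm (H ^ k) S S) s t
    rw [Matrix.mul_apply, Matrix.mul_apply]
    calc ∑ j : Fin p, H s.1 j * (H ^ k) j t.1
        = ∑ j ∈ S, H s.1 j * (H ^ k) j t.1 := by
          refine (Finset.sum_subset (Finset.subset_univ S) ?_).symm
          intro x _ hx
          exact h s.1 s.2 x hx t.1 t.2 k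
      _ = ∑ j : S, H s.1 j.1 * (H ^ k) j.1 t.1 :=
          (Finset.sum_coe_sort S (fun m => H s.1 m * (H ^ k) m t.1)).symm
      _ = ∑ j : S, subm H S S s j * subm (H ^ k) S S j t := rfl


/-- for ancestral sets `C ⊆ A` and `D := A \ C`, the Schur complement satisfies
`Φ_{DD} - Φ_{DC} Φ_{CC}⁻¹ Φ_{CD} = σ (I_D - H_{DD})⁻¹ ((I_D - H_{DD})⁻¹)^*`, equivalently
`(Φ_{DD} - Φ_{DC} Φ_{CC}⁻¹ Φ_{CD})⁻¹ = (1/σ)(I_D - H_{DD})^* (I_D - H_{DD})`. -/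
theorem schur_complement_ancestral {p : ℕ}
    (E : Fin p → Fin p → Prop) (hacyc : Acyclic E)
    (σ : ℝ) (hσ : 0 < σ)
    (H : Matrix (Fin p) (Fin p) ℂ) (hH : ∀ a b : Fin p, H a b ≠ 0 ↔ E b a)
    (C A : Finset (Fin p)) (hCA : C ⊆ A)
    (hancC : Ancestral E C) (hancA : Ancestral E A) :
    subm (Phi σ H) (A \ C) (A \ C) -
        subm (Phi σ H) (A \ C) C * (subm (Phi σ H) C C)⁻¹ * subm (Phi σ H) C (A \ C) =
      (σ : ℂ) • ((1 - subm H (A \ C) (A \ C))⁻¹ * ((1 - subm H (A \ C) (A \ C))⁻¹)ᴴ) ∧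
    (subm (Phi σ H) (A \ C) (A \ C) -
        subm (Phi σ H) (A \ C) C * (subm (Phi σ H) C C)⁻¹ * subm (Phi σ H) C (A \ C))⁻¹ =
      (σ : ℂ)⁻¹ • ((1 - subm H (A \ C) (A \ C))ᴴ * (1 - subm H (A \ C) (A \ C))) := by
  classical
  have hσ0 : (σ : ℂ) ≠ 0 := by
    exact_mod_cast ne_of_gt hσ
  set D := A \ C with hDdef
  have hDA : ∀ s : Fin p, s ∈ D → s ∈ A := fun s hs => (Finset.mem_sdiff.mp hs).1
  have hDC : ∀ s : Fin p, s ∈ D → s ∉ C := fun s hs => (Finset.mem_sdiff.mp hs).2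
  have hHp : H ^ p = 0 := hpow_p_zero E hacyc H hH
  set N : Matrix (Fin p) (Fin p) ℂ := ∑ k ∈ Finset.range p, H ^ k with hNdef
  have hNr : (1 - H) * N = 1 := by rw [hNdef, mul_neg_geom_sum, hHp, sub_zero]
  have hNeq : (1 - H)⁻¹ = N := Matrix.inv_eq_right_inv hNr
  have hPhi : Phi σ H = (σ : ℂ) • (N * Nᴴ) := by rw [Phi, hNeq]
  have hNCrow : ∀ c ∈ C, ∀ j, j ∉ C → N c j = 0 := by
    intro c hc j hj
    rw [hNdef, Matrix.sum_apply]
    exact Finset.sum_eq_zero fun k _ => pow_row_zero E H hH C hancC k c hc j hj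
  have hNArow : ∀ a ∈ A, ∀ j, j ∉ A → N a j = 0 := by
    intro a ha j hj
    rw [hNdef, Matrix.sum_apply]
    exact Finset.sum_eq_zero fun k _ => pow_row_zero E H hH A hancA k a ha j hj
  have hCclosed : ∀ s ∈ C, ∀ m, m ∉ C → ∀ t ∈ C, ∀ k, H s m * (H ^ k) m t = 0 := by
    intro s hs m hm t ht k
    by_cases h0 : H s m = 0
    · rw [h0, zero_mul]
    · exact absurd (hancC s hs m ((hH s m).1 h0)) hm
  have hDclosed : ∀ s ∈ D, ∀ m, m ∉ D → ∀ t ∈ D, ∀ k, H s m * (H ^ k) m t = 0 := by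
    intro s hs m hm t ht k
    by_cases hmA : m ∈ A
    · have hmC : m ∈ C := by
        by_contra hmc
        exact hm (Finset.mem_sdiff.mpr ⟨hmA, hmc⟩)
      rw [pow_row_zero E H hH C hancC k m hmC t (hDC t ht), mul_zero]
    · have h0 : H s m = 0 := by
        by_contra h0
        exact hmA (hancA s (hDA s hs) m ((hH s m).1 h0))
      rw [h0, zero_mul]
  have key : ∀ S : Finset (Fin p),
      (∀ s ∈ S, ∀ m, m ∉ S → ∀ t ∈ S, ∀ k, H s m * (H ^ k) m t = 0) →
      (1 - subm H S S) * subm N S S = 1 := by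
    intro S hS
    have h1 : subm N S S = ∑ k ∈ Finset.range p, (subm H S S) ^ k := by
      have h0 : subm N S S = ∑ k ∈ Finset.range p, subm (H ^ k) S S := by
        ext s t
        simp [hNdef, subm, Matrix.sum_apply]
      rw [h0]
      exact Finset.sum_congr rfl fun k _ => subm_pow H S hS k
    have h2 : (subm H S S) ^ p = 0 := by
      rw [← subm_pow H S hS p, hHp]
      ext s t
      simp [subm]
    rw [h1, mul_neg_geom_sum, h2, sub_zero]
  have hPC : (1 - subm H C C) * subm N C C = 1 := key C hCclosed
  have hPD : (1 - subm H D D) * subm N D D = 1 := key D hDclosed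
  have hPC' : subm N C C * (1 - subm H C C) = 1 := mul_eq_one_comm.mp hPC
  have hPD' : subm N D D * (1 - subm H D D) = 1 := mul_eq_one_comm.mp hPD
  have hRval : (1 - subm H D D)⁻¹ = subm N D D := Matrix.inv_eq_right_inv hPD
  set P := subm N C C with hPdef
  set Q := subm N D C with hQdef
  set R := subm N D D with hRdef
  set Pi := 1 - subm H C C with hPidef
  set Ri := 1 - subm H D D with hRidef
  have h1 : Pᴴ * Piᴴ = 1 := by
    rw [← Matrix.conjTranspose_mul, hPC, Matrix.conjTranspose_one]
  have h1D : Rᴴ * Riᴴ = 1 := by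
    rw [← Matrix.conjTranspose_mul, hPD, Matrix.conjTranspose_one]
  -- block formulas for Phi
  have hPhiCC : subm (Phi σ H) C C = (σ : ℂ) • (P * Pᴴ) := by
    ext s t
    show Phi σ H s.1 t.1 = ((σ : ℂ) • (P * Pᴴ)) s t
    rw [hPhi]
    simp only [Matrix.smul_apply, Matrix.mul_apply, Matrix.conjTranspose_apply, smul_eq_mul]
    congr 1
    calc ∑ m : Fin p, N s.1 m * star (N t.1 m)
        = ∑ m ∈ C, N s.1 m * star (N t.1 m) := by
          refine (Finset.sum_subset (Finset.subset_univ C) ?_).symm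
          intro x _ hx
          rw [hNCrow s.1 s.2 x hx, zero_mul]
      _ = ∑ m : C, N s.1 m.1 * star (N t.1 m.1) := (Finset.sum_coe_sort _ _).symm
      _ = ∑ m : C, P s m * star (P t m) := rfl
  have hPhiDC : subm (Phi σ H) D C = (σ : ℂ) • (Q * Pᴴ) := by
    ext s t
    show Phi σ H s.1 t.1 = ((σ : ℂ) • (Q * Pᴴ)) s t
    rw [hPhi]
    simp only [Matrix.smul_apply, Matrix.mul_apply, Matrix.conjTranspose_apply, smul_eq_mul]
    congr 1
    calc ∑ m : Fin p, N s.1 m * star (N t.1 m)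
        = ∑ m ∈ C, N s.1 m * star (N t.1 m) := by
          refine (Finset.sum_subset (Finset.subset_univ C) ?_).symm
          intro x _ hx
          rw [hNCrow t.1 t.2 x hx, star_zero, mul_zero]
      _ = ∑ m : C, N s.1 m.1 * star (N t.1 m.1) := (Finset.sum_coe_sort _ _).symm
      _ = ∑ m : C, Q s m * star (P t m) := rfl
  have hPhiCD : subm (Phi σ H) C D = (σ : ℂ) • (P * Qᴴ) := by
    ext s t
    show Phi σ H s.1 t.1 = ((σ : ℂ) • (P * Qᴴ)) s t
    rw [hPhi]
    simp only [Matrix.smul_apply, Matrix.mul_apply, Matrix.conjTranspose_apply, smul_eq_mul]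
    congr 1
    calc ∑ m : Fin p, N s.1 m * star (N t.1 m)
        = ∑ m ∈ C, N s.1 m * star (N t.1 m) := by
          refine (Finset.sum_subset (Finset.subset_univ C) ?_).symm
          intro x _ hx
          rw [hNCrow s.1 s.2 x hx, zero_mul]
      _ = ∑ m : C, N s.1 m.1 * star (N t.1 m.1) := (Finset.sum_coe_sort _ _).symm
      _ = ∑ m : C, P s m * star (Q t m) := rfl
  have hPhiDD : subm (Phi σ H) D D = (σ : ℂ) • (Q * Qᴴ + R * Rᴴ) := by
    ext s t
    show Phi σ H s.1 t.1 = ((σ : ℂ) • (Q * Qᴴ + R * Rᴴ)) s t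
    rw [hPhi]
    simp only [Matrix.smul_apply, Matrix.add_apply, Matrix.mul_apply,
      Matrix.conjTranspose_apply, smul_eq_mul]
    congr 1
    calc ∑ m : Fin p, N s.1 m * star (N t.1 m)
        = ∑ m ∈ A, N s.1 m * star (N t.1 m) := by
          refine (Finset.sum_subset (Finset.subset_univ A) ?_).symm
          intro x _ hx
          rw [hNArow s.1 (hDA s.1 s.2) x hx, zero_mul]
      _ = ∑ m ∈ C, N s.1 m * star (N t.1 m) + ∑ m ∈ A \ C, N s.1 m * star (N t.1 m) := by
          rw [add_comm]
          exact (Finset.sum_sdiff hCA).symm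
      _ = (∑ m : C, Q s m * star (Q t m)) + ∑ m : D, R s m * star (R t m) := by
          rw [← Finset.sum_coe_sort C (fun m => N s.1 m * star (N t.1 m)),
            ← Finset.sum_coe_sort (A \ C) (fun m => N s.1 m * star (N t.1 m))]
          rfl
  have hPPH_inv : (subm (Phi σ H) C C)⁻¹ = (σ : ℂ)⁻¹ • (Piᴴ * Pi) := by
    rw [hPhiCC]
    apply Matrix.inv_eq_right_inv
    rw [Matrix.smul_mul, Matrix.mul_smul, smul_smul, mul_inv_cancel₀ hσ0, one_smul]
    rw [Matrix.mul_assoc, ← Matrix.mul_assoc Pᴴ, h1, Matrix.one_mul, hPC']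
  have hschur : subm (Phi σ H) D D -
      subm (Phi σ H) D C * (subm (Phi σ H) C C)⁻¹ * subm (Phi σ H) C D =
      (σ : ℂ) • (R * Rᴴ) := by
    rw [hPhiDD, hPhiDC, hPhiCD, hPPH_inv]
    have hmid : ((σ : ℂ) • (Q * Pᴴ)) * ((σ : ℂ)⁻¹ • (Piᴴ * Pi)) * ((σ : ℂ) • (P * Qᴴ)) =
        (σ : ℂ) • (Q * Qᴴ) := by
      simp only [Matrix.smul_mul, Matrix.mul_smul, smul_smul]
      congr 1
      · field_simp
      · simp only [Matrix.mul_assoc]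
        rw [← Matrix.mul_assoc Pi P Qᴴ, hPC, Matrix.one_mul,
          ← Matrix.mul_assoc Pᴴ Piᴴ Qᴴ, h1, Matrix.one_mul]
    rw [hmid, smul_add, add_comm, add_sub_cancel_right]
  have hinv : ((σ : ℂ) • (R * Rᴴ))⁻¹ = (σ : ℂ)⁻¹ • (Riᴴ * Ri) := by
    apply Matrix.inv_eq_right_inv
    rw [Matrix.smul_mul, Matrix.mul_smul, smul_smul, mul_inv_cancel₀ hσ0, one_smul]
    rw [Matrix.mul_assoc, ← Matrix.mul_assoc Rᴴ, h1D, Matrix.one_mul, hPD']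
  constructor
  · rw [hschur, hRval]
  · rw [hschur, hinv]
end
end

section
/- (Lemma 3.3, second part, combined with Lemma 3.5.) Suppose β > 0 is such that |H_{ik}| ≥ β for every edge (k,i) ∈ E. Let j ∈ V and let C ⊆ V \ {j} be an ancestral set with pa(j) ⊄ C. Then f(j,C) ≥ σ(1 + β²) > σ. -/
open Matrix
open scoped Classical

noncomputable section

/- ======================= auxiliary lemmas ======================= -/

lemma anc_closed {p : ℕ} {E : Fin p → Fin p → Prop} {C : Finset (Fin p)} (hanc : Ancestral E C)
    {m c : Fin p} (h : Relation.TransGen E m c) (hc : c ∈ C) : m ∈ C := by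
  induction h with
  | single h => exact hanc _ hc _ h
  | tail hab hbc ih => exact ih (hanc _ hc _ hbc)

lemma wf_anc {p : ℕ} {E : Fin p → Fin p → Prop} (hacyc : Acyclic E) :
    WellFounded (Relation.TransGen E) := by
  haveI : IsTrans (Fin p) (Relation.TransGen E) := ⟨fun _ _ _ => Relation.TransGen.trans⟩
  haveI : IsIrrefl (Fin p) (Relation.TransGen E) := ⟨hacyc⟩
  exact Finite.wellFounded_of_trans_of_irrefl _

lemma wf_desc {p : ℕ} {E : Fin p → Fin p → Prop} (hacyc : Acyclic E) :
    WellFounded (fun a b : Fin p => Relation.TransGen E b a) := by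
  have h : (fun a b : Fin p => Relation.TransGen E b a)
      = Relation.TransGen (Function.swap E) := by
    funext a b; exact propext Relation.transGen_swap.symm
  rw [h]
  haveI : IsTrans (Fin p) (Relation.TransGen (Function.swap E)) :=
    ⟨fun _ _ _ => Relation.TransGen.trans⟩
  haveI : IsIrrefl (Fin p) (Relation.TransGen (Function.swap E)) :=
    ⟨fun a ha => hacyc a (Relation.transGen_swap.mp ha)⟩
  exact Finite.wellFounded_of_trans_of_irrefl _

lemma isUnit_one_sub {p : ℕ} {E : Fin p → Fin p → Prop} (hacyc : Acyclic E)
    {H : Matrix (Fin p) (Fin p) ℂ} (hH : ∀ a b : Fin p, H a b ≠ 0 ↔ E b a) :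
    IsUnit (1 - H) := by
  rw [← Matrix.mulVec_injective_iff_isUnit]
  have key : ∀ v : Fin p → ℂ, (1 - H) *ᵥ v = 0 → v = 0 := by
    intro v hv
    by_contra hne
    have hS : {i : Fin p | v i ≠ 0}.Nonempty := by
      by_contra hempty
      exact hne (funext fun i => by
        by_contra hvi
        exact hempty ⟨i, hvi⟩)
    obtain ⟨i, hi, hmin⟩ := (wf_anc hacyc).has_min _ hS
    have h0 : ((1 - H) *ᵥ v) i = 0 := congrFun hv i
    rw [Matrix.sub_mulVec, Matrix.one_mulVec, Pi.sub_apply] at h0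
    have hz : (H *ᵥ v) i = 0 := by
      show ∑ m, H i m * v m = 0
      refine Finset.sum_eq_zero fun m _ => ?_
      by_cases hm : v m = 0
      · rw [hm, mul_zero]
      · by_cases hHim : H i m = 0
        · rw [hHim, zero_mul]
        · exact absurd (Relation.TransGen.single ((hH i m).mp hHim)) (hmin m hm)
    rw [hz, sub_zero] at h0
    exact hi h0
  intro v v' h
  have := key (v - v') (by rw [Matrix.mulVec_sub, h, sub_self])
  exact sub_eq_zero.mp this

/-- Zero-extension of a vector supported on `C`. -/
def extv {p : ℕ} (C : Finset (Fin p)) (x : {c // c ∈ C} → ℂ) : Fin p → ℂ :=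
  fun m => if h : m ∈ C then x ⟨m, h⟩ else 0

lemma extv_mem {p : ℕ} (C : Finset (Fin p)) (x : {c // c ∈ C} → ℂ) {m : Fin p} (h : m ∈ C) :
    extv C x m = x ⟨m, h⟩ := dif_pos h

lemma extv_not_mem {p : ℕ} (C : Finset (Fin p)) (x : {c // c ∈ C} → ℂ) {m : Fin p}
    (h : m ∉ C) : extv C x m = 0 := dif_neg h

lemma star_extv {p : ℕ} (C : Finset (Fin p)) (x : {c // c ∈ C} → ℂ) :
    star (extv C x) = extv C (star x) := by
  funext m
  show star (extv C x m) = extv C (star x) m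
  by_cases h : m ∈ C
  · rw [extv_mem C x h, extv_mem C (star x) h]; rfl
  · rw [extv_not_mem C x h, extv_not_mem C (star x) h, star_zero]

lemma extv_mul_sum {p : ℕ} (C : Finset (Fin p)) (f : {c // c ∈ C} → ℂ) (g : Fin p → ℂ) :
    ∑ n : Fin p, extv C f n * g n = ∑ c : {c // c ∈ C}, f c * g c.1 := by
  classical
  have h1 : ∑ n : Fin p, extv C f n * g n = ∑ n ∈ C, extv C f n * g n :=
    (Finset.sum_subset (Finset.subset_univ C)
      (fun x _ hx => by rw [extv_not_mem C f hx, zero_mul])).symm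
  rw [h1, ← Finset.sum_coe_sort C]
  exact Finset.sum_congr rfl fun c _ => by rw [extv_mem C f c.2]

lemma mul_extv_sum {p : ℕ} (C : Finset (Fin p)) (f : {c // c ∈ C} → ℂ) (g : Fin p → ℂ) :
    ∑ n : Fin p, g n * extv C f n = ∑ c : {c // c ∈ C}, g c.1 * f c := by
  classical
  have h1 : ∑ n : Fin p, g n * extv C f n = ∑ n ∈ C, g n * extv C f n :=
    (Finset.sum_subset (Finset.subset_univ C)
      (fun x _ hx => by rw [extv_not_mem C f hx, mul_zero])).symm
  rw [h1, ← Finset.sum_coe_sort C]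
  exact Finset.sum_congr rfl fun c _ => by rw [extv_mem C f c.2]

/-- Ancestors (or members) of `C ∪ {j}`. -/
def ancset {p : ℕ} (E : Fin p → Fin p → Prop) (C : Finset (Fin p)) (j : Fin p) :
    Set (Fin p) :=
  {m | ∃ t, (t ∈ C ∨ t = j) ∧ (m = t ∨ Relation.TransGen E m t)}

/- ======================= main theorem ======================= -/

/-- Lemma 3.3 second part + Lemma 3.5: if `|H_{ik}| ≥ β > 0` on every edge
`(k,i) ∈ E`, `C ⊆ V \ {j}` is ancestral and `pa(j) ⊄ C`, then `f(j,C) ≥ σ(1 + β²) > σ`. -/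
theorem condPSD_ge_of_missing_parent {p : ℕ}
    (E : Fin p → Fin p → Prop) (hacyc : Acyclic E)
    (σ : ℝ) (hσ : 0 < σ)
    (H : Matrix (Fin p) (Fin p) ℂ) (hH : ∀ a b : Fin p, H a b ≠ 0 ↔ E b a)
    (β : ℝ) (hβ : 0 < β) (hHβ : ∀ i k : Fin p, E k i → β ≤ ‖H i k‖)
    (j : Fin p) (C : Finset (Fin p)) (hjC : j ∉ C)
    (hanc : Ancestral E C) (hpa : ¬ parents E j ⊆ ↑C) :
    σ * (1 + β ^ 2) ≤ condPSD σ H j C ∧ σ < condPSD σ H j C := by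
  classical
  have hunit : IsUnit (1 - H) := isUnit_one_sub hacyc hH
  have hdet : IsUnit (1 - H).det := (Matrix.isUnit_iff_isUnit_det _).mp hunit
  have hA1det : IsUnit ((1 - H)ᴴ).det :=
    (Matrix.isUnit_iff_isUnit_det _).mp ((Matrix.isUnit_conjTranspose (1 - H)).mpr hunit)
  -- the quadratic form of Phi
  have hnormsq : ∀ y : Fin p → ℂ,
      star y ⬝ᵥ y = ((∑ i, Complex.normSq (y i) : ℝ) : ℂ) := by
    intro y
    rw [Complex.ofReal_sum]
    refine Finset.sum_congr rfl fun i _ => ?_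
    rw [Complex.normSq_eq_conj_mul_self]
    rfl
  have hquad : ∀ v : Fin p → ℂ,
      star v ⬝ᵥ (Phi σ H) *ᵥ v
        = ((σ * ∑ i, Complex.normSq ((((1 - H)⁻¹)ᴴ *ᵥ v) i) : ℝ) : ℂ) := by
    intro v
    have hPhi : Phi σ H = (σ : ℂ) • ((1 - H)⁻¹ * ((1 - H)⁻¹)ᴴ) := rfl
    have h2 : star v ᵥ* (1 - H)⁻¹ = star (((1 - H)⁻¹)ᴴ *ᵥ v) := by
      rw [Matrix.star_mulVec, Matrix.conjTranspose_conjTranspose]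
    rw [hPhi, Matrix.smul_mulVec, dotProduct_smul, ← Matrix.mulVec_mulVec,
      Matrix.dotProduct_mulVec, h2, hnormsq, smul_eq_mul, ← Complex.ofReal_mul]
  -- conditional covariance matrix
  set M : Matrix {c // c ∈ C} {c // c ∈ C} ℂ := subm (Phi σ H) C C with hMdef
  have hext_mulVec : ∀ (x : {c // c ∈ C} → ℂ) (c : {c // c ∈ C}),
      ((Phi σ H) *ᵥ extv C x) c.1 = (M *ᵥ x) c := by
    intro x c
    rw [hMdef]
    show ∑ n, Phi σ H c.1 n * extv C x n = ∑ c', (subm (Phi σ H) C C) c c' * x c'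
    rw [mul_extv_sum]
    rfl
  -- invertibility of M
  have hMdet : IsUnit M.det := by
    rw [← Matrix.isUnit_iff_isUnit_det, ← Matrix.mulVec_injective_iff_isUnit]
    have key : ∀ x : {c // c ∈ C} → ℂ, M *ᵥ x = 0 → x = 0 := by
      intro x hx
      have h0 : star (extv C x) ⬝ᵥ (Phi σ H) *ᵥ (extv C x) = 0 := by
        calc star (extv C x) ⬝ᵥ (Phi σ H) *ᵥ (extv C x)
            = ∑ n, extv C (star x) n * ((Phi σ H) *ᵥ extv C x) n := by
              rw [← star_extv]; rfl
          _ = ∑ c : {c // c ∈ C}, star x c * ((Phi σ H) *ᵥ extv C x) c.1 :=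
              extv_mul_sum C (star x) _
          _ = ∑ c : {c // c ∈ C}, star x c * (M *ᵥ x) c :=
              Finset.sum_congr rfl fun c _ => by rw [hext_mulVec x c]
          _ = 0 := by rw [hx]; simp
      rw [hquad] at h0
      have hS0 : σ * (∑ i, Complex.normSq ((((1 - H)⁻¹)ᴴ *ᵥ extv C x) i)) = 0 := by
        exact_mod_cast h0
      have hsum0 : ∑ i, Complex.normSq ((((1 - H)⁻¹)ᴴ *ᵥ extv C x) i) = 0 := by
        rcases mul_eq_zero.mp hS0 with h | h
        · exact absurd h (ne_of_gt hσ)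
        · exact h
      have hy0 : ((1 - H)⁻¹)ᴴ *ᵥ extv C x = 0 := by
        funext i
        have := (Finset.sum_eq_zero_iff_of_nonneg
          (fun i _ => Complex.normSq_nonneg _)).mp hsum0 i (Finset.mem_univ i)
        exact Complex.normSq_eq_zero.mp this
      have h1 : (1 - H)ᴴ *ᵥ (((1 - H)⁻¹)ᴴ *ᵥ extv C x) = extv C x := by
        rw [Matrix.conjTranspose_nonsing_inv, Matrix.mulVec_mulVec,
          Matrix.mul_nonsing_inv _ hA1det, Matrix.one_mulVec]
      rw [hy0, Matrix.mulVec_zero] at h1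
      funext c
      have h2 := congrFun h1.symm c.1
      rw [extv_mem C x c.2] at h2
      simpa using h2
    intro x x' h
    have := key (x - x') (by rw [Matrix.mulVec_sub, h, sub_self])
    exact sub_eq_zero.mp this
  -- the optimal coefficient vector
  set bb : {c // c ∈ C} → ℂ := fun c => Phi σ H c.1 j with hbbdef
  set lam : {c // c ∈ C} → ℂ := M⁻¹ *ᵥ bb with hlamdef
  have hMlam : M *ᵥ lam = bb := by
    rw [hlamdef, Matrix.mulVec_mulVec, Matrix.mul_nonsing_inv _ hMdet, Matrix.one_mulVec]
  set w : Fin p → ℂ := Pi.single j 1 - extv C lam with hwdef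
  set u : Fin p → ℂ := ((1 - H)⁻¹)ᴴ *ᵥ w with hudef
  -- expansion of the quadratic form at w
  have hsingle_star : star ((Pi.single j (1 : ℂ)) : Fin p → ℂ) = ((Pi.single j (1 : ℂ)) : Fin p → ℂ) := by
    funext m
    simp [Pi.single_apply, apply_ite]
  have hPj : (Phi σ H) *ᵥ (Pi.single j 1) = fun i => Phi σ H i j := by
    rw [Matrix.mulVec_single]
    funext i
    simp
  have hP1 : Pi.single j (1:ℂ) ⬝ᵥ ((Phi σ H) *ᵥ Pi.single j 1) = Phi σ H j j := by
    rw [single_dotProduct, hPj, one_mul]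
  have hP2 : Pi.single j (1:ℂ) ⬝ᵥ ((Phi σ H) *ᵥ extv C lam)
      = dotProduct (fun c : {c // c ∈ C} => Phi σ H j c.1) lam := by
    rw [single_dotProduct, one_mul]
    show ∑ n, Phi σ H j n * extv C lam n = _
    rw [mul_extv_sum]
    rfl
  have hT4c : ∀ c : {c // c ∈ C}, ((Phi σ H) *ᵥ extv C lam) c.1 = Phi σ H c.1 j := by
    intro c
    rw [hext_mulVec lam c, hMlam]
  have hP3 : extv C (star lam) ⬝ᵥ ((Phi σ H) *ᵥ Pi.single j 1)
      = ∑ c : {c // c ∈ C}, star (lam c) * Phi σ H c.1 j := by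
    rw [hPj]
    show ∑ n, extv C (star lam) n * Phi σ H n j = _
    rw [extv_mul_sum]
    rfl
  have hP4 : extv C (star lam) ⬝ᵥ ((Phi σ H) *ᵥ extv C lam)
      = ∑ c : {c // c ∈ C}, star (lam c) * Phi σ H c.1 j := by
    show ∑ n, extv C (star lam) n * ((Phi σ H) *ᵥ extv C lam) n = _
    rw [extv_mul_sum]
    exact Finset.sum_congr rfl fun c _ => by rw [hT4c c]; rfl
  have hexp : star w ⬝ᵥ (Phi σ H) *ᵥ w
      = Phi σ H j j - dotProduct (fun c : {c // c ∈ C} => Phi σ H j c.1) lam := by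
    calc star w ⬝ᵥ (Phi σ H) *ᵥ w
        = (Pi.single j 1 - extv C (star lam)) ⬝ᵥ
            ((Phi σ H) *ᵥ Pi.single j 1 - (Phi σ H) *ᵥ extv C lam) := by
          rw [hwdef, Matrix.mulVec_sub, star_sub, hsingle_star, star_extv]
      _ = (Pi.single j (1:ℂ) ⬝ᵥ ((Phi σ H) *ᵥ Pi.single j 1)
            - Pi.single j (1:ℂ) ⬝ᵥ ((Phi σ H) *ᵥ extv C lam))
            - (extv C (star lam) ⬝ᵥ ((Phi σ H) *ᵥ Pi.single j 1)
            - extv C (star lam) ⬝ᵥ ((Phi σ H) *ᵥ extv C lam)) := by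
          rw [sub_dotProduct, dotProduct_sub, dotProduct_sub]
      _ = Phi σ H j j - dotProduct (fun c : {c // c ∈ C} => Phi σ H j c.1) lam := by
          rw [hP1, hP2, hP3, hP4, sub_self, sub_zero]
  -- the coordinate recursion for u
  have hA1u : (1 - H)ᴴ *ᵥ u = w := by
    rw [hudef, Matrix.conjTranspose_nonsing_inv, Matrix.mulVec_mulVec,
      Matrix.mul_nonsing_inv _ hA1det, Matrix.one_mulVec]
  have hcoord : ∀ m, u m = w m + ∑ i, (starRingEnd ℂ) (H i m) * u i := by
    intro m
    have h1 : w m = ∑ i, ((1 - H)ᴴ) m i * u i := by rw [← hA1u]; rfl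
    have h2 : ∀ i, ((1 - H)ᴴ) m i * u i
        = (if i = m then u i else 0) - (starRingEnd ℂ) (H i m) * u i := by
      intro i
      rw [Matrix.conjTranspose_apply, Matrix.sub_apply, Matrix.one_apply, star_sub, sub_mul]
      congr 1
      by_cases h : i = m
      · rw [if_pos h, if_pos h, star_one, one_mul]
      · rw [if_neg h, if_neg h, star_zero, zero_mul]
    have h3 : w m = u m - ∑ i, (starRingEnd ℂ) (H i m) * u i := by
      rw [h1, Finset.sum_congr rfl (fun i _ => h2 i), Finset.sum_sub_distrib]
      congr 1
      simp
    rw [h3]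
    ring
  -- support of u
  have hsupp : ∀ m, m ∉ ancset E C j → u m = 0 := by
    intro m
    refine (wf_desc hacyc).induction
      (C := fun m => m ∉ ancset E C j → u m = 0) m ?_
    intro m IH hm
    have hmC : m ∉ C := fun h => hm ⟨m, Or.inl h, Or.inl rfl⟩
    have hmj : m ≠ j := fun h => hm ⟨j, Or.inr rfl, Or.inl h⟩
    have hwm : w m = 0 := by
      rw [hwdef, Pi.sub_apply, Pi.single_eq_of_ne hmj, extv_not_mem C lam hmC, sub_zero]
    rw [hcoord m, hwm, zero_add]
    refine Finset.sum_eq_zero fun i _ => ?_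
    by_cases hHim : H i m = 0
    · rw [hHim, map_zero, zero_mul]
    · have hEmi : E m i := (hH i m).mp hHim
      have hiA : i ∉ ancset E C j := by
        rintro ⟨t, ht, hit⟩
        refine hm ⟨t, ht, Or.inr ?_⟩
        rcases hit with rfl | hit
        · exact Relation.TransGen.single hEmi
        · exact Relation.TransGen.head hEmi hit
      rw [IH i (Relation.TransGen.single hEmi) hiA, mul_zero]
  -- u at j
  have hEj : ∀ i, E j i → i ∉ ancset E C j := by
    intro i hEji
    rintro ⟨t, ht, hit⟩
    rcases ht with htC | rfl
    · have hiC : i ∈ C := by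
        rcases hit with rfl | hit
        · exact htC
        · exact anc_closed hanc hit htC
      exact hjC (hanc i hiC j hEji)
    · rcases hit with rfl | hit
      · exact hacyc i (Relation.TransGen.single hEji)
      · exact hacyc _ (Relation.TransGen.head hEji hit)
  have huj : u j = 1 := by
    rw [hcoord j]
    have hwj : w j = 1 := by
      rw [hwdef, Pi.sub_apply, Pi.single_eq_same, extv_not_mem C lam hjC, sub_zero]
    have hz : ∑ i, (starRingEnd ℂ) (H i j) * u i = 0 := by
      refine Finset.sum_eq_zero fun i _ => ?_
      by_cases hHij : H i j = 0
      · rw [hHij, map_zero, zero_mul]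
      · rw [hsupp i (hEj i ((hH i j).mp hHij)), mul_zero]
    rw [hwj, hz, add_zero]
  -- the missing parent, chosen maximal
  obtain ⟨k0, hk0pa, hk0C⟩ := Set.not_subset.mp hpa
  have hk0C' : k0 ∉ C := fun h => hk0C h
  have hk0j : k0 ≠ j := fun h => hacyc j (Relation.TransGen.single (h ▸ hk0pa))
  obtain ⟨k, hkS, hkmin⟩ := (wf_desc hacyc).has_min
    {k | k ∉ C ∧ k ≠ j ∧ Relation.TransGen E k j}
    ⟨k0, hk0C', hk0j, Relation.TransGen.single hk0pa⟩
  obtain ⟨hkC, hkj, hkTG⟩ := hkS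
  have hEkj : E k j := by
    rcases Relation.TransGen.head'_iff.mp hkTG with ⟨i, hki, hij⟩
    rcases Relation.reflTransGen_iff_eq_or_transGen.mp hij with rfl | hij'
    · exact hki
    · have hiC : i ∉ C := fun h => hkC (hanc i h k hki)
      exact absurd (Relation.TransGen.single hki)
        (hkmin i ⟨hiC, fun h => hacyc j (h ▸ hij'), hij'⟩)
  -- u at k
  have hEk : ∀ i, E k i → i ≠ j → u i = 0 := by
    intro i hEki hij
    refine hsupp i ?_
    rintro ⟨t, ht, hit⟩
    rcases ht with htC | rfl
    · have hiC : i ∈ C := by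
        rcases hit with rfl | hit
        · exact htC
        · exact anc_closed hanc hit htC
      exact hkC (hanc i hiC k hEki)
    · rcases hit with rfl | hit
      · exact hij rfl
      · have hiC : i ∉ C := fun h => hkC (hanc i h k hEki)
        exact hkmin i ⟨hiC, hij, hit⟩ (Relation.TransGen.single hEki)
  have huk : u k = (starRingEnd ℂ) (H j k) := by
    rw [hcoord k]
    have hwk : w k = 0 := by
      rw [hwdef, Pi.sub_apply, Pi.single_eq_of_ne hkj, extv_not_mem C lam hkC, sub_zero]
    have hsum : ∑ i, (starRingEnd ℂ) (H i k) * u i = (starRingEnd ℂ) (H j k) := by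
      rw [Finset.sum_eq_single j]
      · rw [huj, mul_one]
      · intro i _ hij
        by_cases hHik : H i k = 0
        · rw [hHik, map_zero, zero_mul]
        · rw [hEk i ((hH i k).mp hHik) hij, mul_zero]
      · intro h
        exact absurd (Finset.mem_univ j) h
    rw [hwk, hsum, zero_add]
  -- the value of condPSD
  have hval : condPSD σ H j C = σ * ∑ i, Complex.normSq (u i) := by
    have h1 : condPSD σ H j C
        = (Phi σ H j j
          - dotProduct (fun c : {c // c ∈ C} => Phi σ H j c.1) lam).re := by
      rw [hlamdef, hbbdef, hMdef]
      rfl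
    rw [h1, ← hexp, hquad w, ← hudef, Complex.ofReal_re]
  -- final bounds
  have hjk : j ≠ k := Ne.symm hkj
  have hsum_ge : 1 + β ^ 2 ≤ ∑ i, Complex.normSq (u i) := by
    have h2 : ∑ i ∈ ({j, k} : Finset (Fin p)), Complex.normSq (u i)
        ≤ ∑ i, Complex.normSq (u i) :=
      Finset.sum_le_sum_of_subset_of_nonneg (Finset.subset_univ _)
        (fun i _ _ => Complex.normSq_nonneg _)
    rw [Finset.sum_pair hjk] at h2
    refine le_trans ?_ h2
    rw [huj, huk, Complex.normSq_conj, Complex.normSq_one]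
    have hb2 : β ^ 2 ≤ Complex.normSq (H j k) := by
      rw [← Complex.sq_norm]
      exact pow_le_pow_left₀ hβ.le (hHβ j k hEkj) 2
    linarith
  have hle : σ * (1 + β ^ 2) ≤ condPSD σ H j C := by
    rw [hval]
    exact mul_le_mul_of_nonneg_left hsum_ge hσ.le
  refine ⟨hle, lt_of_lt_of_le ?_ hle⟩
  have hsb : 0 < σ * β ^ 2 := by positivity
  nlinarith
end
end

section
/- (Lemma 4.1, Bartlett-window approximation of the PSD.) Let R : ℤ → ℂ^{p×p} satisfy ‖R(k)‖ ≤ C ρ^{−|k|} for all k ∈ ℤ, where C > 0, ρ > 1 and ‖·‖ is the spectral norm. Fix ω ∈ [0,2π] and define Φ(ω) := Σ_{k∈ℤ} R(k) e^{−iωk} (the series converges absolutely) and, for N ∈ ℕ, Φ̃_N(ω) := Σ_{k=−(N−1)}^{N−1} (1 − |k|/N) R(k) e^{−iωk}. Then for every ε₁ > 0, if N > 2Cρ^{−1} / ((1 − ρ^{−1})² ε₁) then ‖Φ̃_N(ω) − Φ(ω)‖ < ε₁. -/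
open Matrix Real
open scoped Matrix.Norms.L2Operator

noncomputable section

/-- Lemma 4.1, Bartlett-window approximation of the PSD: if
`‖R(k)‖ ≤ C ρ^{-|k|}` with `C > 0`, `ρ > 1`, then for `ω ∈ [0,2π]`,
`Φ(ω) := Σ_{k ∈ ℤ} R(k) e^{-iωk}` and
`Φ̃_N(ω) := Σ_{|k| ≤ N-1} (1 - |k|/N) R(k) e^{-iωk}` satisfy
`‖Φ̃_N(ω) - Φ(ω)‖ < ε₁` whenever `N > 2Cρ⁻¹ / ((1 - ρ⁻¹)² ε₁)`. -/
theorem bartlett_window_approx {p : ℕ}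
    (R : ℤ → Matrix (Fin p) (Fin p) ℂ) (c ρ : ℝ) (hc : 0 < c) (hρ : 1 < ρ)
    (hR : ∀ k : ℤ, ‖R k‖ ≤ c * ρ ^ (-|k|))
    (ω : ℝ) (hω : ω ∈ Set.Icc (0 : ℝ) (2 * π))
    (ε₁ : ℝ) (hε₁ : 0 < ε₁) (N : ℕ)
    (hN : (N : ℝ) > 2 * c * ρ⁻¹ / ((1 - ρ⁻¹) ^ 2 * ε₁)) :
    ‖(∑ k ∈ Finset.Icc (-(N : ℤ) + 1) ((N : ℤ) - 1),
        ((1 - (|k| : ℝ) / N : ℝ) : ℂ) •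
          Complex.exp (-Complex.I * ω * k) • R k) -
      ∑' k : ℤ, Complex.exp (-Complex.I * ω * k) • R k‖ < ε₁ := by
  have hρ0 : (0:ℝ) < ρ := lt_trans one_pos hρ
  set x : ℝ := ρ⁻¹ with hxdef
  have hx0 : 0 < x := inv_pos.2 hρ0
  have hx1 : x < 1 := inv_lt_one_of_one_lt₀ hρ
  have h1x : 0 < 1 - x := by linarith
  have hNpos : 0 < (N:ℝ) := lt_of_le_of_lt (by positivity) hN
  set f : ℤ → Matrix (Fin p) (Fin p) ℂ :=
    fun k => Complex.exp (-Complex.I * ω * k) • R k with hfdef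
  -- norm of f
  have hnormf : ∀ k : ℤ, ‖f k‖ = ‖R k‖ := by
    intro k
    rw [hfdef]
    have he : (-Complex.I * ω * k) = ((-(ω * k) : ℝ) : ℂ) * Complex.I := by
      push_cast; ring
    rw [norm_smul, he, Complex.norm_exp_ofReal_mul_I, one_mul]
  have hbound : ∀ k : ℤ, ‖f k‖ ≤ c * x ^ k.natAbs := by
    intro k
    have : ρ ^ (-|k|) = x ^ k.natAbs := by
      rw [hxdef, Int.abs_eq_natAbs, _root_.zpow_neg, zpow_natCast, ← inv_pow]
    rw [hnormf]
    calc ‖R k‖ ≤ c * ρ ^ (-|k|) := hR k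
      _ = c * x ^ k.natAbs := by rw [this]
  -- summability of the geometric bound over ℤ
  have hsumnat : Summable (fun n : ℕ => c * x ^ n) :=
    (summable_geometric_of_lt_one hx0.le hx1).mul_left c
  have hsumZ : Summable (fun k : ℤ => c * x ^ k.natAbs) := by
    apply Summable.of_nat_of_neg_add_one
    · simpa using hsumnat
    · have : (fun n : ℕ => c * x ^ (-((n : ℤ) + 1)).natAbs)
          = fun n : ℕ => (c * x) * x ^ n := by
        funext n
        have hn : (-((n : ℤ) + 1)).natAbs = n + 1 := by omega
        rw [hn, pow_succ]; ring
      rw [this]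
      exact (summable_geometric_of_lt_one hx0.le hx1).mul_left (c * x)
  have hfs : Summable f := hsumZ.of_norm_bounded hbound
  -- rewrite the finite sum as a tsum
  set s : Finset ℤ := Finset.Icc (-(N : ℤ) + 1) ((N : ℤ) - 1) with hsdef
  set W : ℤ → Matrix (Fin p) (Fin p) ℂ :=
    fun k => if k ∈ s then ((1 - (|k| : ℝ) / N : ℝ) : ℂ) • f k else 0 with hWdef
  have hWfin : Summable W := summable_of_ne_finset_zero (s := s) (fun k hk => if_neg hk)
  have hWsum : (∑ k ∈ s, ((1 - (|k| : ℝ) / N : ℝ) : ℂ) • f k) = ∑' k, W k := by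
    rw [tsum_eq_sum (s := s) (fun k hk => if_neg hk)]
    exact Finset.sum_congr rfl fun k hk => (if_pos hk).symm
  rw [hWsum, ← Summable.tsum_sub hWfin hfs]
  -- pointwise bound on ‖W k - f k‖
  set b : ℝ := x / (1 - x) ^ 2 with hbdef
  have hcast : ∀ k : ℤ, ((|k| : ℤ) : ℝ) = (k.natAbs : ℝ) := by
    intro k; rw [Nat.cast_natAbs, Int.cast_abs]
  have hWb : ∀ k : ℤ, ‖W k - f k‖ ≤ c / N * ((k.natAbs : ℝ) * x ^ k.natAbs) := by
    intro k
    have hfk := hbound k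
    have hfk0 : (0:ℝ) ≤ ‖f k‖ := norm_nonneg _
    have hxn0 : (0:ℝ) ≤ x ^ k.natAbs := by positivity
    by_cases hk : k ∈ s
    · have : W k - f k = ((((1 - (|k| : ℝ) / N : ℝ)) : ℂ) - 1) • f k := by
        rw [hWdef]; simp only [if_pos hk, sub_smul, one_smul]
      rw [this, norm_smul]
      have hnrm : ‖(((1 - (|k| : ℝ) / N : ℝ) : ℂ) - 1)‖ = (k.natAbs : ℝ) / N := by
        have : (((1 - (|k| : ℝ) / N : ℝ) : ℂ) - 1) = ((-( (k.natAbs : ℝ) / N) : ℝ) : ℂ) := by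
          rw [← hcast k]; push_cast; ring
        rw [this, Complex.norm_real, Real.norm_eq_abs, abs_neg, abs_of_nonneg (by positivity)]
      rw [hnrm]
      calc (k.natAbs : ℝ) / N * ‖f k‖ ≤ (k.natAbs : ℝ) / N * (c * x ^ k.natAbs) :=
            mul_le_mul_of_nonneg_left hfk (by positivity)
        _ = c / N * ((k.natAbs : ℝ) * x ^ k.natAbs) := by ring
    · have hkN : (N : ℝ) ≤ (k.natAbs : ℝ) := by
        have : N ≤ k.natAbs := by
          simp only [hsdef, Finset.mem_Icc, not_and_or, not_le] at hk
          omega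
        exact_mod_cast this
      have : W k - f k = -f k := by rw [hWdef]; simp only [if_neg hk, zero_sub]
      rw [this, norm_neg]
      calc ‖f k‖ ≤ c * x ^ k.natAbs := hfk
        _ ≤ (k.natAbs : ℝ) / N * (c * x ^ k.natAbs) := by
            apply le_mul_of_one_le_left (by positivity)
            rw [le_div_iff₀ hNpos, one_mul]; exact hkN
        _ = c / N * ((k.natAbs : ℝ) * x ^ k.natAbs) := by ring
  -- sum of the bound
  have hxnorm : ‖x‖ < 1 := by rwa [Real.norm_eq_abs, abs_of_pos hx0]
  have hgnat : HasSum (fun n : ℕ => (n : ℝ) * x ^ n) b :=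
    hasSum_coe_mul_geometric_of_norm_lt_one hxnorm
  have hgneg : HasSum (fun n : ℕ => ((-((n : ℤ) + 1)).natAbs : ℝ) * x ^ (-((n : ℤ) + 1)).natAbs) b := by
    have heq : (fun n : ℕ => ((-((n : ℤ) + 1)).natAbs : ℝ) * x ^ (-((n : ℤ) + 1)).natAbs)
        = fun n : ℕ => ((n + 1 : ℕ) : ℝ) * x ^ (n + 1) := by
      funext n
      have hn : (-((n : ℤ) + 1)).natAbs = n + 1 := by omega
      rw [hn]
    rw [heq]
    have h0 : HasSum (fun n : ℕ => (n : ℝ) * x ^ n)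
        (b + ∑ i ∈ Finset.range 1, (i : ℝ) * x ^ i) := by simpa using hgnat
    have := (hasSum_nat_add_iff (f := fun n : ℕ => (n : ℝ) * x ^ n) 1).2 h0
    simpa using this
  have hgZ : HasSum (fun k : ℤ => (k.natAbs : ℝ) * x ^ k.natAbs) (b + b) :=
    HasSum.of_nat_of_neg_add_one (by simpa using hgnat) hgneg
  have hbZ : HasSum (fun k : ℤ => c / N * ((k.natAbs : ℝ) * x ^ k.natAbs)) (c / N * (b + b)) :=
    hgZ.mul_left _
  calc ‖∑' k, (W k - f k)‖ ≤ c / N * (b + b) := tsum_of_norm_bounded hbZ hWb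
    _ < ε₁ := by
        have h2 : 2 * c * x < N * ((1 - x) ^ 2 * ε₁) :=
          (div_lt_iff₀ (by positivity)).1 hN
        have hkey : c / N * (b + b) = 2 * c * x / (N * (1 - x) ^ 2) := by
          rw [hbdef]; field_simp; ring
        rw [hkey, div_lt_iff₀ (by positivity)]
        nlinarith [h2]
end
end
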